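/- Let m ≥ 1, let B⁽⁰⁾, …, B⁽ᵐ⁻¹⁾ be N×N real matrices and ψ⁽⁰⁾, …, ψ⁽ᵐ⁻¹⁾ ∈ ℝ^N. Given v⁽⁰⁾ ∈ ℝ^N, define recursively v⁽ᵏ⁺¹⁾ = B⁽ᵏ⁾v⁽ᵏ⁾/(1 + ψ⁽ᵏ⁾ᵀv⁽ᵏ⁾), assuming 1 + ψ⁽ᵏ⁾ᵀv⁽ᵏ⁾ ≠ 0 for every k < m. Define B^{(k,0)} = B⁽ᵏ⁻¹⁾B⁽ᵏ⁻²⁾⋯B⁽⁰⁾ and ψ^{(m,0)} = ψ⁽⁰⁾ + Σ_{k=1}^{m−1} (B^{(k,0)})ᵀ ψ⁽ᵏ⁾. Then 1 + ψ^{(m,0)ᵀ}v⁽⁰⁾ = ∏_{k=0}^{m−1} (1 + ψ⁽ᵏ⁾ᵀv⁽ᵏ⁾) and v⁽ᵐ⁾ = B^{(m,0)} v⁽⁰⁾ / (1 + ψ^{(m,0)ᵀ}v⁽⁰⁾). -/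

import Mathlib

open Matrix

/-- Composing `m` fractional-linear wall-to-wall transition maps:
with `B^{(k,0)} = B⁽ᵏ⁻¹⁾⋯B⁽⁰⁾` and `ψ^{(m,0)} = ψ⁽⁰⁾ + Σ_{k=1}^{m−1} B^{(k,0)ᵀ} ψ⁽ᵏ⁾`,
the composite denominator is the product of the step denominators and
`v⁽ᵐ⁾ = B^{(m,0)} v⁽⁰⁾ / (1 + ψ^{(m,0)ᵀ} v⁽⁰⁾)`. -/
theorem stmt3 (N m : ℕ) (hm : 1 ≤ m)
    (B : ℕ → Matrix (Fin N) (Fin N) ℝ) (ψ : ℕ → Fin N → ℝ)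
    (v : ℕ → Fin N → ℝ)
    (hden : ∀ k < m, 1 + ψ k ⬝ᵥ v k ≠ 0)
    (hrec : ∀ k < m, v (k+1) = (1 + ψ k ⬝ᵥ v k)⁻¹ • (B k).mulVec (v k))
    (Bprod : ℕ → Matrix (Fin N) (Fin N) ℝ)
    (hBprod : ∀ k, Bprod k = ((List.range k).reverse.map B).prod)
    (ψm : Fin N → ℝ)
    (hψm : ψm = ψ 0 + ∑ k ∈ Finset.Ico 1 m, (Bprod k)ᵀ.mulVec (ψ k)) :
    1 + ψm ⬝ᵥ v 0 = ∏ k ∈ Finset.range m, (1 + ψ k ⬝ᵥ v k) ∧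
    v m = (1 + ψm ⬝ᵥ v 0)⁻¹ • (Bprod m).mulVec (v 0) := by
  subst hψm
  set D : ℕ → ℝ := fun k => ∏ i ∈ Finset.range k, (1 + ψ i ⬝ᵥ v i) with hD
  have hBsucc : ∀ k, Bprod (k+1) = B k * Bprod k := by
    intro k
    rw [hBprod, hBprod, List.range_succ, List.reverse_append]
    simp
  have hB0 : Bprod 0 = 1 := by rw [hBprod]; simp
  have hDsucc : ∀ k, D (k+1) = D k * (1 + ψ k ⬝ᵥ v k) := by
    intro k; simp [hD, Finset.prod_range_succ]
  have hDne : ∀ k ≤ m, D k ≠ 0 := by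
    intro k hk
    simp only [hD]
    exact Finset.prod_ne_zero_iff.2 fun i hi =>
      hden i (lt_of_lt_of_le (Finset.mem_range.1 hi) hk)
  have hv : ∀ k ≤ m, v k = (D k)⁻¹ • (Bprod k).mulVec (v 0) := by
    intro k hk
    induction k with
    | zero => simp [hB0, hD]
    | succ n ih =>
      have hn : n ≤ m := Nat.le_of_succ_le hk
      rw [hrec n hk, ih hn, hBsucc, hDsucc]
      rw [Matrix.mulVec_smul, smul_smul, ← Matrix.mulVec_mulVec, mul_inv, ← ih hn]
      ring_nf
  have hBv : ∀ k ≤ m, (Bprod k).mulVec (v 0) = D k • v k := by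
    intro k hk
    rw [hv k hk, smul_smul, mul_inv_cancel₀ (hDne k hk), one_smul]
  have hkey : ∀ n, 1 + ∑ k ∈ Finset.range n, D k * (ψ k ⬝ᵥ v k) = D n := by
    intro n
    induction n with
    | zero => simp [hD]
    | succ p ih => rw [Finset.sum_range_succ, hDsucc, ← ih]; ring
  have hden' : 1 + (ψ 0 + ∑ k ∈ Finset.Ico 1 m, (Bprod k)ᵀ.mulVec (ψ k)) ⬝ᵥ v 0 = D m := by
    have hsum : (∑ k ∈ Finset.Ico 1 m, (Bprod k)ᵀ *ᵥ ψ k) ⬝ᵥ v 0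
        = ∑ k ∈ Finset.Ico 1 m, ((Bprod k)ᵀ *ᵥ ψ k) ⬝ᵥ v 0 := by
      simp only [dotProduct, Finset.sum_apply, Finset.sum_mul]
      rw [Finset.sum_comm]
    rw [add_dotProduct, hsum]
    have hterm : ∀ k ∈ Finset.Ico 1 m,
        ((Bprod k)ᵀ.mulVec (ψ k)) ⬝ᵥ v 0 = D k * (ψ k ⬝ᵥ v k) := by
      intro k hk
      rw [Matrix.mulVec_transpose, ← Matrix.dotProduct_mulVec,
        hBv k (le_of_lt (Finset.mem_Ico.1 hk).2), dotProduct_smul]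
      simp [mul_comm]
    rw [Finset.sum_congr rfl hterm, ← hkey m, Finset.range_eq_Ico,
      Finset.sum_eq_sum_Ico_succ_bot (by omega : 0 < m)]
    have h0 : D 0 = 1 := by simp [hD]
    rw [h0]
    ring
  refine ⟨hden', ?_⟩
  rw [hden', hv m le_rfl]
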